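/- Unitary synthesis for arbitrary real linear combinations: let H be an n×n Hermitian complex matrix, ψ ∈ ℂ^n a unit vector, Ψ = ψψ†, E_Ψ = ⟨ψ, Hψ⟩, and assume V_Ψ = ⟨ψ, H²ψ⟩ − E_Ψ² > 0. Let x, y ∈ ℝ with y ≠ 0 or x > 0, and note (xI + yH)ψ ≠ 0. Set s_Ψ = −(sgn(y)/√V_Ψ)·arccos( (x + y·E_Ψ) / ‖(xI + yH)ψ‖ ). Then exp(s_Ψ·[Ψ,H]) ψ = (xI + yH)ψ / ‖(xI + yH)ψ‖. -/

import Mathlib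

open scoped InnerProductSpace
open Matrix

noncomputable section

/-- The action of a matrix on a vector in `EuclideanSpace ℂ (Fin n)`. -/
def matApp {n : ℕ} (M : Matrix (Fin n) (Fin n) ℂ) (v : EuclideanSpace ℂ (Fin n)) :
    EuclideanSpace ℂ (Fin n) :=
  Matrix.toEuclideanLin M v

/-- The rank-one outer product `ψψ†`. -/
def outerProd {n : ℕ} (v : EuclideanSpace ℂ (Fin n)) : Matrix (Fin n) (Fin n) ℂ :=
  Matrix.of fun a b => v a * (starRingEnd ℂ) (v b)

/-- Energy mean `E_Ψ = ⟨ψ, Hψ⟩`. -/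
def energyMean {n : ℕ} (H : Matrix (Fin n) (Fin n) ℂ) (v : EuclideanSpace ℂ (Fin n)) : ℝ :=
  (⟪v, matApp H v⟫_ℂ).re

/-- Energy variance `V_Ψ = ⟨ψ, H²ψ⟩ − E_Ψ²`. -/
def energyVar {n : ℕ} (H : Matrix (Fin n) (Fin n) ℂ) (v : EuclideanSpace ℂ (Fin n)) : ℝ :=
  (⟪v, matApp (H * H) v⟫_ℂ).re - (energyMean H v) ^ 2

namespace UnitarySynthAux

lemma matApp_eq_clm {n : ℕ} (M : Matrix (Fin n) (Fin n) ℂ) (v : EuclideanSpace ℂ (Fin n)) :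
    matApp M v = Matrix.toEuclideanCLM (𝕜 := ℂ) M v := rfl

lemma matApp_mulM {n : ℕ} (M N : Matrix (Fin n) (Fin n) ℂ) (v : EuclideanSpace ℂ (Fin n)) :
    matApp (M * N) v = matApp M (matApp N v) := by
  show Matrix.toEuclideanCLM (𝕜 := ℂ) (M * N) v = _
  rw [_root_.map_mul]; rfl

lemma matApp_smulM {n : ℕ} (c : ℂ) (M : Matrix (Fin n) (Fin n) ℂ) (v : EuclideanSpace ℂ (Fin n)) :
    matApp (c • M) v = c • matApp M v := by
  show Matrix.toEuclideanCLM (𝕜 := ℂ) (c • M) v = _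
  rw [_root_.map_smul]; rfl

lemma matApp_addM {n : ℕ} (M N : Matrix (Fin n) (Fin n) ℂ) (v : EuclideanSpace ℂ (Fin n)) :
    matApp (M + N) v = matApp M v + matApp N v := by
  show Matrix.toEuclideanCLM (𝕜 := ℂ) (M + N) v = _
  rw [_root_.map_add]; rfl

lemma matApp_subM {n : ℕ} (M N : Matrix (Fin n) (Fin n) ℂ) (v : EuclideanSpace ℂ (Fin n)) :
    matApp (M - N) v = matApp M v - matApp N v := by
  show Matrix.toEuclideanCLM (𝕜 := ℂ) (M - N) v = _
  rw [_root_.map_sub]; rfl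

lemma matApp_oneM {n : ℕ} (v : EuclideanSpace ℂ (Fin n)) : matApp 1 v = v := by
  show Matrix.toEuclideanCLM (𝕜 := ℂ) 1 v = _
  rw [_root_.map_one]; rfl

lemma matApp_smulv {n : ℕ} (M : Matrix (Fin n) (Fin n) ℂ) (c : ℂ) (v : EuclideanSpace ℂ (Fin n)) :
    matApp M (c • v) = c • matApp M v :=
  map_smul (Matrix.toEuclideanLin M) c v

lemma matApp_addv {n : ℕ} (M : Matrix (Fin n) (Fin n) ℂ) (v w : EuclideanSpace ℂ (Fin n)) :
    matApp M (v + w) = matApp M v + matApp M w :=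
  map_add (Matrix.toEuclideanLin M) v w

lemma matApp_subv {n : ℕ} (M : Matrix (Fin n) (Fin n) ℂ) (v w : EuclideanSpace ℂ (Fin n)) :
    matApp M (v - w) = matApp M v - matApp M w :=
  map_sub (Matrix.toEuclideanLin M) v w

lemma matApp_zerov {n : ℕ} (M : Matrix (Fin n) (Fin n) ℂ) :
    matApp M (0 : EuclideanSpace ℂ (Fin n)) = 0 :=
  map_zero (Matrix.toEuclideanLin M)

lemma matApp_outerProd {n : ℕ} (v χ : EuclideanSpace ℂ (Fin n)) :
    matApp (outerProd v) χ = ⟪v, χ⟫_ℂ • v := by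
  ext a
  show ∑ b, (v a * (starRingEnd ℂ) (v b)) * χ b = _
  rw [PiLp.smul_apply, PiLp.inner_apply]
  simp only [RCLike.inner_apply, smul_eq_mul]
  rw [Finset.sum_mul]
  exact Finset.sum_congr rfl fun b _ => by ring

lemma matApp_inner_left {n : ℕ} (H : Matrix (Fin n) (Fin n) ℂ) (hH : H.IsHermitian)
    (u w : EuclideanSpace ℂ (Fin n)) :
    ⟪matApp H u, w⟫_ℂ = ⟪u, matApp H w⟫_ℂ := by
  have h1 : star (Matrix.toEuclideanCLM (𝕜 := ℂ) H) = Matrix.toEuclideanCLM (𝕜 := ℂ) H := by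
    rw [← map_star, show star H = H from hH]
  have h2 := ContinuousLinearMap.adjoint_inner_left (Matrix.toEuclideanCLM (𝕜 := ℂ) H) w u
  rw [← ContinuousLinearMap.star_eq_adjoint, h1] at h2
  exact h2

lemma toCLM_exp {n : ℕ} (M : Matrix (Fin n) (Fin n) ℂ) :
    Matrix.toEuclideanCLM (𝕜 := ℂ) (NormedSpace.exp M) =
      NormedSpace.exp (Matrix.toEuclideanCLM (𝕜 := ℂ) M) := by
  letI : SeminormedRing (Matrix (Fin n) (Fin n) ℂ) := Matrix.linftyOpSemiNormedRing
  letI : NormedRing (Matrix (Fin n) (Fin n) ℂ) := Matrix.linftyOpNormedRing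
  letI : NormedAlgebra ℂ (Matrix (Fin n) (Fin n) ℂ) := Matrix.linftyOpNormedAlgebra
  have hc : Continuous (Matrix.toEuclideanCLM (𝕜 := ℂ) (n := Fin n)) := by
    let L : Matrix (Fin n) (Fin n) ℂ →ₗ[ℂ]
        (EuclideanSpace ℂ (Fin n) →L[ℂ] EuclideanSpace ℂ (Fin n)) :=
      { toFun := Matrix.toEuclideanCLM (𝕜 := ℂ)
        map_add' := fun a b => map_add _ a b
        map_smul' := fun c a => map_smul _ c a }
    exact L.continuous_of_finiteDimensional
  letI : NormedAlgebra ℚ (Matrix (Fin n) (Fin n) ℂ) := NormedAlgebra.restrictScalars ℚ ℂ _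
  exact NormedSpace.map_exp (Matrix.toEuclideanCLM (𝕜 := ℂ) (n := Fin n)) hc M

lemma exp_apply_eigenvector {E : Type*} [NormedAddCommGroup E] [NormedSpace ℂ E] [CompleteSpace E]
    (T : E →L[ℂ] E) (μ : ℂ) (u : E) (h : T u = μ • u) :
    NormedSpace.exp T u = Complex.exp μ • u := by
  have hk : ∀ k : ℕ, (T ^ k) u = μ ^ k • u := by
    intro k
    induction k with
    | zero => simp
    | succ k ih =>
      rw [pow_succ, ContinuousLinearMap.mul_apply, h, _root_.map_smul, ih, smul_smul, pow_succ]
      ring_nf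
  have h1 : NormedSpace.exp T u = ∑' k : ℕ, ((k.factorial : ℂ)⁻¹ • T ^ k) u := by
    rw [NormedSpace.exp_eq_tsum ℂ]
    exact ((ContinuousLinearMap.apply ℂ E u).map_tsum
      (NormedSpace.expSeries_summable' (𝕂 := ℂ) T))
  rw [h1]
  have h2 : ∀ k : ℕ, ((k.factorial : ℂ)⁻¹ • T ^ k) u = ((k.factorial : ℂ)⁻¹ • μ ^ k) • u := by
    intro k
    rw [ContinuousLinearMap.smul_apply, hk, smul_smul, smul_eq_mul]
  simp_rw [h2]
  rw [Summable.tsum_smul_const (NormedSpace.expSeries_summable' (𝕂 := ℂ) μ), Complex.exp_eq_exp_ℂ,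
    NormedSpace.exp_eq_tsum ℂ]

end UnitarySynthAux

open UnitarySynthAux

set_option maxHeartbeats 2000000 in
/-- Unitary synthesis for arbitrary real linear combinations:
for Hermitian `H`, unit `ψ` with `V_Ψ > 0`, and reals `x, y` with `y ≠ 0` or `x > 0`,
one has `(xI + yH)ψ ≠ 0`, and with
`s_Ψ = −(sgn(y)/√V_Ψ)·arccos((x + y·E_Ψ)/‖(xI + yH)ψ‖)`,
`exp(s_Ψ·[Ψ,H]) ψ = (xI + yH)ψ / ‖(xI + yH)ψ‖`. -/
theorem unitary_synthesis_linear_combination {n : ℕ} (hn : 1 ≤ n)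
    (H : Matrix (Fin n) (Fin n) ℂ) (hH : H.IsHermitian)
    (ψ : EuclideanSpace ℂ (Fin n)) (hψ : ‖ψ‖ = 1)
    (hV : 0 < energyVar H ψ) (x y : ℝ) (hxy : y ≠ 0 ∨ 0 < x) :
    matApp ((x : ℂ) • 1 + (y : ℂ) • H) ψ ≠ 0 ∧
    matApp
        (NormedSpace.exp
          (((-(Real.sign y / Real.sqrt (energyVar H ψ))
              * Real.arccos ((x + y * energyMean H ψ)
                  / ‖matApp ((x : ℂ) • 1 + (y : ℂ) • H) ψ‖) : ℝ) : ℂ)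
            • (outerProd ψ * H - H * outerProd ψ))) ψ
      = (‖matApp ((x : ℂ) • 1 + (y : ℂ) • H) ψ‖ : ℂ)⁻¹
          • matApp ((x : ℂ) • 1 + (y : ℂ) • H) ψ := by
  have hsym := matApp_inner_left H hH
  set Eψ := energyMean H ψ with hEdef
  set v := Real.sqrt (energyVar H ψ) with hvdef
  have hv : 0 < v := Real.sqrt_pos.mpr hV
  have hv2 : v ^ 2 = energyVar H ψ := Real.sq_sqrt hV.le
  have hvC : (v : ℂ) ≠ 0 := by exact_mod_cast hv.ne'
  have hψψ : ⟪ψ, ψ⟫_ℂ = 1 := by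
    rw [inner_self_eq_norm_sq_to_K, hψ]; norm_num
  have hE : ⟪ψ, matApp H ψ⟫_ℂ = (Eψ : ℂ) := by
    have h1 : (starRingEnd ℂ) ⟪ψ, matApp H ψ⟫_ℂ = ⟪ψ, matApp H ψ⟫_ℂ := by
      rw [inner_conj_symm]; exact hsym ψ ψ
    rw [Complex.conj_eq_iff_re] at h1
    exact h1.symm
  have hE' : ⟪matApp H ψ, ψ⟫_ℂ = (Eψ : ℂ) := by rw [hsym]; exact hE
  have hH2 : ⟪ψ, matApp (H * H) ψ⟫_ℂ = ((energyVar H ψ + Eψ ^ 2 : ℝ) : ℂ) := by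
    have h0 : matApp (H * H) ψ = matApp H (matApp H ψ) := matApp_mulM H H ψ
    have h1 : ⟪ψ, matApp (H * H) ψ⟫_ℂ = ((‖matApp H ψ‖ ^ 2 : ℝ) : ℂ) := by
      rw [h0, ← hsym ψ (matApp H ψ), inner_self_eq_norm_sq_to_K]
      norm_cast
    have h2 : energyVar H ψ = (⟪ψ, matApp (H * H) ψ⟫_ℂ).re - Eψ ^ 2 := rfl
    rw [h1] at h2
    rw [Complex.ofReal_re] at h2
    rw [h1]
    exact congrArg _ (by linarith)
  have hHH : ⟪matApp H ψ, matApp H ψ⟫_ℂ = ((energyVar H ψ + Eψ ^ 2 : ℝ) : ℂ) := by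
    rw [hsym, ← matApp_mulM]; exact hH2
  -- the companion unit vector φ
  set φ : EuclideanSpace ℂ (Fin n) := (v : ℂ)⁻¹ • (matApp H ψ - (Eψ : ℂ) • ψ) with hφdef
  have hHψ : matApp H ψ = (Eψ : ℂ) • ψ + (v : ℂ) • φ := by
    rw [hφdef, smul_smul, mul_inv_cancel₀ hvC, one_smul]; abel
  have hinner1 : ⟪ψ, φ⟫_ℂ = 0 := by
    rw [hφdef]
    rw [inner_smul_right, inner_sub_right, inner_smul_right, hE, hψψ]
    ring
  have hinner2 : ⟪φ, ψ⟫_ℂ = 0 := by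
    rw [← inner_conj_symm, hinner1, map_zero]
  have hinner4 : ⟪φ, φ⟫_ℂ = 1 := by
    rw [hφdef]
    rw [inner_smul_right, inner_smul_left, inner_sub_right, inner_sub_left, inner_sub_left,
      inner_smul_right, inner_smul_right, inner_smul_left, inner_smul_left, hE, hE', hψψ, hHH]
    rw [map_inv₀, Complex.conj_ofReal, Complex.conj_ofReal]
    have : ((energyVar H ψ : ℝ) : ℂ) = ((v : ℂ)) ^ 2 := by
      rw [← hv2]; push_cast; ring
    rw [Complex.ofReal_add, this]
    field_simp
    push_cast; ring
  have hφnorm : ‖φ‖ = 1 := by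
    have h2 : ‖φ‖ ^ 2 = 1 := by
      rw [← inner_self_eq_norm_sq (𝕜 := ℂ) φ, hinner4]
      norm_num
    nlinarith [norm_nonneg φ]
  have hinner3 : ⟪ψ, matApp H φ⟫_ℂ = (v : ℂ) := by
    rw [hφdef, matApp_smulv, matApp_subv, matApp_smulv, ← matApp_mulM]
    rw [inner_smul_right, inner_sub_right, inner_smul_right, hE, hH2]
    have : ((energyVar H ψ : ℝ) : ℂ) = ((v : ℂ)) ^ 2 := by
      rw [← hv2]; push_cast; ring
    rw [Complex.ofReal_add, this]
    field_simp
    push_cast; ring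
  -- the commutator action
  set A : Matrix (Fin n) (Fin n) ℂ := outerProd ψ * H - H * outerProd ψ with hAdef
  have haψ : matApp A ψ = -((v : ℂ) • φ) := by
    rw [hAdef, matApp_subM, matApp_mulM, matApp_mulM, matApp_outerProd, hE,
      matApp_outerProd, hψψ, one_smul, hHψ]
    module
  have haφ : matApp A φ = (v : ℂ) • ψ := by
    rw [hAdef, matApp_subM, matApp_mulM, matApp_mulM, matApp_outerProd, hinner3,
      matApp_outerProd, hinner1, zero_smul, matApp_zerov]
    abel
  -- the linear combination vector
  set w : EuclideanSpace ℂ (Fin n) := matApp ((x : ℂ) • 1 + (y : ℂ) • H) ψ with hwdef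
  have hwval : w = ((x + y * Eψ : ℝ) : ℂ) • ψ + ((y * v : ℝ) : ℂ) • φ := by
    rw [hwdef, matApp_addM, matApp_smulM, matApp_smulM, matApp_oneM, hHψ]
    push_cast
    module
  clear hφdef hAdef
  clear_value φ A w
  have hwinner : ⟪w, w⟫_ℂ = (((x + y * Eψ) ^ 2 + (y * v) ^ 2 : ℝ) : ℂ) := by
    rw [hwval]
    rw [inner_add_left, inner_add_right, inner_add_right, inner_smul_left, inner_smul_left,
      inner_smul_right, inner_smul_right, inner_smul_left, inner_smul_left, inner_smul_right,
      inner_smul_right, hψψ, hinner1, hinner2, hinner4, Complex.conj_ofReal, Complex.conj_ofReal]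
    push_cast
    ring
  have hN2 : ‖w‖ ^ 2 = (x + y * Eψ) ^ 2 + (y * v) ^ 2 := by
    rw [← inner_self_eq_norm_sq (𝕜 := ℂ) w, hwinner]
    norm_cast
  have hNpos : 0 < ‖w‖ := by
    rcases eq_or_ne y 0 with hy0 | hy0
    · have hx : 0 < x := hxy.resolve_left (fun h => h hy0)
      have h1 : 0 < ‖w‖ ^ 2 := by rw [hN2, hy0]; nlinarith
      nlinarith [norm_nonneg w]
    · have h1 : 0 < ‖w‖ ^ 2 := by
        have : y * v ≠ 0 := mul_ne_zero hy0 hv.ne'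
        rw [hN2]; nlinarith [sq_nonneg (x + y * Eψ), sq_pos_of_ne_zero this]
      nlinarith [norm_nonneg w]
  have hwne : w ≠ 0 := fun h => by rw [h, norm_zero] at hNpos; exact lt_irrefl 0 hNpos
  refine ⟨hwne, ?_⟩
  set N := ‖w‖ with hNdef
  -- the rotation angle
  set θ := Real.arccos ((x + y * Eψ) / ‖w‖) with hθdef
  set s : ℝ := -(Real.sign y / v) * θ with hsdef
  set t : ℝ := -(Real.sign y) * θ with htdef
  have hst : s * v = t := by
    rw [hsdef, htdef]; field_simp
  have hbound1 : -1 ≤ (x + y * Eψ) / ‖w‖ := by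
    rw [neg_le, ← neg_div, div_le_one hNpos]
    nlinarith [hN2, sq_nonneg (y * v), sq_nonneg (x + y * Eψ + ‖w‖), norm_nonneg w]
  have hbound2 : (x + y * Eψ) / ‖w‖ ≤ 1 := by
    rw [div_le_one hNpos]
    nlinarith [hN2, sq_nonneg (y * v), sq_nonneg (x + y * Eψ - ‖w‖), norm_nonneg w]
  have hcos : Real.cos t = (x + y * Eψ) / ‖w‖ := by
    rcases eq_or_ne y 0 with hy0 | hy0
    · have hx : 0 < x := hxy.resolve_left (fun h => h hy0)
      have hwx : ‖w‖ = x := by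
        have : ‖w‖ ^ 2 = x ^ 2 := by rw [hN2, hy0]; ring
        nlinarith [norm_nonneg w]
      rw [htdef, hy0]
      simp [Real.sign_zero, hwx, div_self hx.ne']
    · have hsign : Real.sign y = 1 ∨ Real.sign y = -1 := (Real.sign_apply_eq_of_ne_zero y hy0).symm
      rcases hsign with h | h
      · rw [htdef, h, neg_one_mul, Real.cos_neg, hθdef, Real.cos_arccos hbound1 hbound2]
      · rw [htdef, h, neg_neg, one_mul, hθdef, Real.cos_arccos hbound1 hbound2]
  have hsin : Real.sin t = -((y * v) / ‖w‖) := by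
    have hsinθ : Real.sin θ = |y| * v / ‖w‖ := by
      rw [hθdef, Real.sin_arccos]
      have h1 : 1 - ((x + y * Eψ) / ‖w‖) ^ 2 = ((y * v) / ‖w‖) ^ 2 := by
        field_simp
        nlinarith [hN2]
      rw [h1, Real.sqrt_sq_eq_abs, abs_div, abs_of_nonneg (norm_nonneg w), abs_mul,
        abs_of_pos hv]
    rcases eq_or_ne y 0 with hy0 | hy0
    · rw [htdef, hy0, Real.sign_zero, neg_zero, zero_mul, Real.sin_zero, zero_mul, zero_div,
        neg_zero]
    · rcases (Real.sign_apply_eq_of_ne_zero y hy0).symm with h | h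
      · have hy : 0 < y := by
          by_contra hneg
          push_neg at hneg
          rcases lt_or_eq_of_le hneg with h2 | h2
          · rw [Real.sign_of_neg h2] at h; norm_num at h
          · exact hy0 h2
        rw [htdef, h, neg_one_mul, Real.sin_neg, hsinθ, abs_of_pos hy]
      · have hy : y < 0 := by
          by_contra hneg
          push_neg at hneg
          rcases lt_or_eq_of_le hneg with h2 | h2
          · rw [Real.sign_of_pos h2] at h; norm_num at h
          · rw [← h2, Real.sign_zero] at h; norm_num at h
        rw [htdef, h, neg_neg, one_mul, hsinθ, abs_of_neg hy]
        field_simp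
  clear_value θ s t
  -- eigenvectors of the generator
  set T := Matrix.toEuclideanCLM (𝕜 := ℂ) ((s : ℂ) • A) with hTdef
  have hTapp : ∀ u, T u = (s : ℂ) • matApp A u := by
    intro u
    rw [hTdef, ← matApp_eq_clm, matApp_smulM]
  have hsv : ((s : ℝ) : ℂ) * ((v : ℝ) : ℂ) = ((t : ℝ) : ℂ) := by
    rw [← hst]; push_cast; ring
  have hTp : T (ψ - Complex.I • φ) = (-(t : ℂ) * Complex.I) • (ψ - Complex.I • φ) := by
    rw [hTapp, matApp_subv, matApp_smulv, haψ, haφ]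
    match_scalars
    · linear_combination -hsv - (t : ℂ) * Complex.I_sq
    · linear_combination (-Complex.I) * hsv
  have hTq : T (ψ + Complex.I • φ) = ((t : ℂ) * Complex.I) • (ψ + Complex.I • φ) := by
    rw [hTapp, matApp_addv, matApp_smulv, haψ, haφ]
    match_scalars
    · linear_combination -hsv - (t : ℂ) * Complex.I_sq
    · linear_combination Complex.I * hsv
  have hexpp := exp_apply_eigenvector T (-(t : ℂ) * Complex.I) (ψ - Complex.I • φ) hTp
  have hexpq := exp_apply_eigenvector T ((t : ℂ) * Complex.I) (ψ + Complex.I • φ) hTq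
  have hgoalL : matApp (NormedSpace.exp ((s : ℂ) • A)) ψ = NormedSpace.exp T ψ := by
    rw [matApp_eq_clm, toCLM_exp, ← hTdef]
  have hψdecomp : ψ = (2⁻¹ : ℂ) • ((ψ - Complex.I • φ) + (ψ + Complex.I • φ)) := by
    module
  have h1 : Complex.exp ((t : ℂ) * Complex.I) + Complex.exp (-(t : ℂ) * Complex.I) =
      2 * (((x + y * Eψ) / ‖w‖ : ℝ) : ℂ) := by
    calc Complex.exp ((t : ℂ) * Complex.I) + Complex.exp (-(t : ℂ) * Complex.I)
        = 2 * Complex.cos (t : ℂ) := by rw [Complex.cos]; ring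
      _ = 2 * ((Real.cos t : ℝ) : ℂ) := by rw [Complex.ofReal_cos]
      _ = 2 * (((x + y * Eψ) / ‖w‖ : ℝ) : ℂ) := by rw [hcos]
  have h2 : (Complex.exp (-(t : ℂ) * Complex.I) - Complex.exp ((t : ℂ) * Complex.I))
        * Complex.I = 2 * ((-((y * v) / ‖w‖) : ℝ) : ℂ) := by
    calc (Complex.exp (-(t : ℂ) * Complex.I) - Complex.exp ((t : ℂ) * Complex.I)) * Complex.I
        = 2 * Complex.sin (t : ℂ) := by rw [Complex.sin]; ring
      _ = 2 * ((Real.sin t : ℝ) : ℂ) := by rw [Complex.ofReal_sin]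
      _ = 2 * ((-((y * v) / ‖w‖) : ℝ) : ℂ) := by rw [hsin]
  push_cast at h1 h2
  rw [hgoalL]
  conv_lhs => rw [hψdecomp]
  rw [_root_.map_smul, _root_.map_add, hexpp, hexpq, hwval]
  match_scalars
  · push_cast
    linear_combination (2⁻¹ : ℂ) * h1
  · push_cast
    linear_combination (-(2⁻¹ : ℂ)) * h2
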